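/- Let u: [0,T] → X be piecewise constant on intervals (t_m, t_{m+1}] with values u^{m+1} and t_m = mk. If k·Σ_{n=0}^{M−r} ‖u^{n+r} − u^n‖_X² ≤ C·(rk) for all 1 ≤ r ≤ M, then for every δ ∈ (0,T): ∫_0^{T−δ} ‖u(t+δ) − u(t)‖_X² dt ≤ C'·δ, for a constant C' independent of k and δ. -/

import Mathlib

open Finset intervalIntegral

open MeasureTheory in
private lemma step_int {a b c : ℝ} {g : ℝ → ℝ} (hab : a ≤ b)
    (h : ∀ t ∈ Set.Ioc a b, g t = c) :
    IntervalIntegrable g volume a b ∧ (∫ t in a..b, g t) = (b - a) * c := by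
  constructor
  · rw [intervalIntegrable_iff_integrableOn_Ioc_of_le hab]
    have hc : IntegrableOn (fun _ : ℝ => c) (Set.Ioc a b) volume :=
      integrableOn_const measure_Ioc_lt_top.ne
    exact hc.congr_fun (fun t ht => (h t ht).symm) measurableSet_Ioc
  · rw [intervalIntegral.integral_of_le hab,
      setIntegral_congr_fun measurableSet_Ioc h, setIntegral_const,
      Real.volume_real_Ioc_of_le hab, smul_eq_mul]

/-- Translation of the discrete fractional time-derivative bound into the
continuous time-shift estimate for piecewise constant interpolants:
∫_0^{T−δ} ‖u(t+δ) − u(t)‖² dt ≤ C' δ, with C' independent of k and δ. -/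
theorem piecewise_constant_time_shift
    {X : Type*} [NormedAddCommGroup X]
    (T C : ℝ) (hT : 0 < T) (hC : 0 ≤ C) :
    ∃ C' : ℝ, 0 < C' ∧
      ∀ (M : ℕ), 0 < M →
        ∀ (v : ℕ → X) (f : ℝ → X),
          (∀ m : ℕ, m < M →
            ∀ t ∈ Set.Ioc ((m : ℝ) * (T / M)) (((m : ℝ) + 1) * (T / M)),
              f t = v (m + 1)) →
          (∀ r : ℕ, 1 ≤ r → r ≤ M →
            (T / M) * ∑ n ∈ range (M - r + 1), ‖v (n + r) - v n‖ ^ 2 ≤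
              C * ((r : ℝ) * (T / M))) →
          ∀ δ ∈ Set.Ioo (0:ℝ) T,
            (∫ t in (0:ℝ)..(T - δ), ‖f (t + δ) - f t‖ ^ 2) ≤ C' * δ := by
  refine ⟨C + 1, by linarith, ?_⟩
  intro M hM v f hf hd δ hδ
  obtain ⟨hδ0, hδT⟩ := hδ
  set k := T / (M : ℝ) with hk
  have hM0 : (0:ℝ) < M := by exact_mod_cast hM
  have hk0 : 0 < k := div_pos hT hM0
  have hTMk : T = M * k := by have := hM0.ne'; rw [hk]; field_simp
  -- choose the shift index r = r' + 1
  obtain ⟨r', hrM, hδle, hδgt⟩ :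
      ∃ r' : ℕ, r' + 1 ≤ M ∧ δ ≤ ((r' : ℝ) + 1) * k ∧ (r' : ℝ) * k < δ := by
    have h1 : 1 ≤ ⌈δ / k⌉₊ := Nat.one_le_ceil_iff.2 (div_pos hδ0 hk0)
    have h2 : ⌈δ / k⌉₊ ≤ M := by
      apply Nat.ceil_le.2
      rw [div_le_iff₀ hk0]
      nlinarith
    refine ⟨⌈δ / k⌉₊ - 1, by omega, ?_, ?_⟩
    · have hcast : ((⌈δ / k⌉₊ - 1 : ℕ) : ℝ) + 1 = (⌈δ / k⌉₊ : ℝ) := by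
        have : (⌈δ / k⌉₊ - 1 : ℕ) + 1 = ⌈δ / k⌉₊ := by omega
        exact_mod_cast congrArg (Nat.cast : ℕ → ℝ) this
      rw [hcast]
      have := Nat.le_ceil (δ / k)
      calc δ = (δ / k) * k := by field_simp
        _ ≤ (⌈δ / k⌉₊ : ℝ) * k := by
            exact mul_le_mul_of_nonneg_right this hk0.le
    · have hcast : ((⌈δ / k⌉₊ - 1 : ℕ) : ℝ) = (⌈δ / k⌉₊ : ℝ) - 1 := by
        have : ((⌈δ / k⌉₊ - 1 : ℕ) : ℝ) + 1 = (⌈δ / k⌉₊ : ℝ) := by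
          have h : (⌈δ / k⌉₊ - 1 : ℕ) + 1 = ⌈δ / k⌉₊ := by omega
          exact_mod_cast congrArg (Nat.cast : ℕ → ℝ) h
        linarith
      rw [hcast]
      have h3 : (⌈δ / k⌉₊ : ℝ) < δ / k + 1 := Nat.ceil_lt_add_one (by positivity)
      have h4 : (⌈δ / k⌉₊ : ℝ) - 1 < δ / k := by linarith
      calc ((⌈δ / k⌉₊ : ℝ) - 1) * k < (δ / k) * k := by
            exact mul_lt_mul_of_pos_right h4 hk0
        _ = δ := by field_simp
  obtain ⟨N, hMN⟩ : ∃ N, M = N + r' + 1 := ⟨M - (r' + 1), by omega⟩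
  have hMcast : (M : ℝ) = (N : ℝ) + (r' : ℝ) + 1 := by exact_mod_cast hMN
  set s := δ - (r' : ℝ) * k with hs
  have hs0 : 0 < s := by simp only [hs]; linarith
  have hsk : s ≤ k := by simp only [hs]; linarith
  have hδeq : δ = (r' : ℝ) * k + s := by simp only [hs]; ring
  have hTδ : T - δ = (N : ℝ) * k + (k - s) := by
    rw [hTMk, hMcast]; linarith
  -- integral over a left piece (n*k, n*k + (k - s)]
  have key1 : ∀ n : ℕ, n + r' + 1 ≤ M →
      IntervalIntegrable (fun t => ‖f (t + δ) - f t‖ ^ 2) MeasureTheory.volume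
        ((n : ℝ) * k) ((n : ℝ) * k + (k - s)) ∧
      (∫ t in ((n : ℝ) * k)..((n : ℝ) * k + (k - s)), ‖f (t + δ) - f t‖ ^ 2)
        = (k - s) * ‖v (n + r' + 1) - v (n + 1)‖ ^ 2 := by
    intro n hn
    have hab : (n : ℝ) * k ≤ (n : ℝ) * k + (k - s) := by linarith
    have hconst : ∀ t ∈ Set.Ioc ((n : ℝ) * k) ((n : ℝ) * k + (k - s)),
        ‖f (t + δ) - f t‖ ^ 2 = ‖v (n + r' + 1) - v (n + 1)‖ ^ 2 := by
      rintro t ⟨ht1, ht2⟩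
      have h1 : f t = v (n + 1) := by
        refine hf n (by omega) t ⟨ht1, ?_⟩
        linarith
      have h2 : f (t + δ) = v (n + r' + 1) := by
        refine hf (n + r') (by omega) (t + δ) ⟨?_, ?_⟩
        · push_cast
          linarith
        · push_cast
          linarith
      rw [h1, h2]
    obtain ⟨hi, he⟩ := step_int hab hconst
    exact ⟨hi, by rw [he]; ring_nf⟩
  -- integral over a right piece (n*k + (k - s), (n+1)*k]
  have key2 : ∀ n : ℕ, n + r' + 2 ≤ M →
      IntervalIntegrable (fun t => ‖f (t + δ) - f t‖ ^ 2) MeasureTheory.volume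
        ((n : ℝ) * k + (k - s)) (((n : ℝ) + 1) * k) ∧
      (∫ t in ((n : ℝ) * k + (k - s))..(((n : ℝ) + 1) * k), ‖f (t + δ) - f t‖ ^ 2)
        = s * ‖v (n + r' + 2) - v (n + 1)‖ ^ 2 := by
    intro n hn
    have hab : (n : ℝ) * k + (k - s) ≤ ((n : ℝ) + 1) * k := by linarith
    have hconst : ∀ t ∈ Set.Ioc ((n : ℝ) * k + (k - s)) (((n : ℝ) + 1) * k),
        ‖f (t + δ) - f t‖ ^ 2 = ‖v (n + r' + 2) - v (n + 1)‖ ^ 2 := by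
      rintro t ⟨ht1, ht2⟩
      have h1 : f t = v (n + 1) := by
        refine hf n (by omega) t ⟨by linarith, ht2⟩
      have h2 : f (t + δ) = v (n + r' + 2) := by
        have := hf (n + r' + 1) (by omega) (t + δ) ⟨by push_cast; linarith,
          by push_cast; linarith⟩
        simpa using this
      rw [h1, h2]
    obtain ⟨hi, he⟩ := step_int hab hconst
    exact ⟨hi, by rw [he]; ring_nf⟩
  -- integral over the full step (n*k, (n+1)*k]
  have hmid : ∀ n : ℕ, n < N →
      IntervalIntegrable (fun t => ‖f (t + δ) - f t‖ ^ 2) MeasureTheory.volume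
        ((n : ℝ) * k) (((n : ℝ) + 1) * k) ∧
      (∫ t in ((n : ℝ) * k)..(((n : ℝ) + 1) * k), ‖f (t + δ) - f t‖ ^ 2)
        = (k - s) * ‖v (n + r' + 1) - v (n + 1)‖ ^ 2
          + s * ‖v (n + r' + 2) - v (n + 1)‖ ^ 2 := by
    intro n hn
    obtain ⟨i1, e1⟩ := key1 n (by omega)
    obtain ⟨i2, e2⟩ := key2 n (by omega)
    exact ⟨i1.trans i2,
      by rw [← intervalIntegral.integral_add_adjacent_intervals i1 i2, e1, e2]⟩
  -- assemble the whole integral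
  have hint : ∀ i : ℕ, i < N →
      IntervalIntegrable (fun t => ‖f (t + δ) - f t‖ ^ 2) MeasureTheory.volume
        (((i : ℕ) : ℝ) * k) ((((i + 1 : ℕ)) : ℝ) * k) := by
    intro i hi
    have := (hmid i hi).1
    push_cast
    convert this using 2 <;> push_cast <;> ring
  have hsum0 : (∫ t in (0:ℝ)..((N : ℝ) * k), ‖f (t + δ) - f t‖ ^ 2)
      = ∑ n ∈ range N, ((k - s) * ‖v (n + r' + 1) - v (n + 1)‖ ^ 2
          + s * ‖v (n + r' + 2) - v (n + 1)‖ ^ 2) := by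
    have h := intervalIntegral.sum_integral_adjacent_intervals
      (f := fun t => ‖f (t + δ) - f t‖ ^ 2) (μ := MeasureTheory.volume)
      (a := fun i : ℕ => (i : ℝ) * k) (n := N) hint
    simp only [Nat.cast_zero, zero_mul] at h
    rw [← h]
    refine Finset.sum_congr rfl fun n hn => ?_
    rw [← (hmid n (Finset.mem_range.1 hn)).2]
    congr 1
    push_cast
    ring
  have hint0N : IntervalIntegrable (fun t => ‖f (t + δ) - f t‖ ^ 2)
      MeasureTheory.volume 0 ((N : ℝ) * k) := by
    have h := IntervalIntegrable.trans_iterate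
      (f := fun t => ‖f (t + δ) - f t‖ ^ 2) (μ := MeasureTheory.volume)
      (a := fun i : ℕ => (i : ℝ) * k) (n := N) hint
    simpa using h
  obtain ⟨iN, eN⟩ := key1 N (by omega)
  have htotal : (∫ t in (0:ℝ)..(T - δ), ‖f (t + δ) - f t‖ ^ 2)
      = (∑ n ∈ range N, ((k - s) * ‖v (n + r' + 1) - v (n + 1)‖ ^ 2
          + s * ‖v (n + r' + 2) - v (n + 1)‖ ^ 2))
        + (k - s) * ‖v (N + r' + 1) - v (N + 1)‖ ^ 2 := by
    rw [hTδ, ← intervalIntegral.integral_add_adjacent_intervals hint0N iN,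
      hsum0, eN]
  have htotal2 : (∫ t in (0:ℝ)..(T - δ), ‖f (t + δ) - f t‖ ^ 2)
      = (k - s) * (∑ n ∈ range (N + 1), ‖v (n + r' + 1) - v (n + 1)‖ ^ 2)
        + s * (∑ n ∈ range N, ‖v (n + r' + 2) - v (n + 1)‖ ^ 2) := by
    rw [htotal, Finset.sum_add_distrib, ← Finset.mul_sum, ← Finset.mul_sum,
      Finset.sum_range_succ]
    ring
  -- bound the two sums using the discrete hypothesis
  set S1 := ∑ n ∈ range (N + 1), ‖v (n + r' + 1) - v (n + 1)‖ ^ 2 with hS1def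
  set S2 := ∑ n ∈ range N, ‖v (n + r' + 2) - v (n + 1)‖ ^ 2 with hS2def
  have hS1nn : 0 ≤ S1 := Finset.sum_nonneg fun _ _ => by positivity
  have hS2nn : 0 ≤ S2 := Finset.sum_nonneg fun _ _ => by positivity
  have hS1 : S1 ≤ C * (r' : ℝ) := by
    rcases Nat.eq_zero_or_pos r' with hr0 | hr0
    · subst hr0
      have : S1 = 0 := by
        rw [hS1def]
        refine Finset.sum_eq_zero fun n _ => by simp
      rw [this]; simp
    · have hfull := hd r' (by omega) (by omega)
      have hidx : M - r' + 1 = N + 2 := by omega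
      rw [hidx, Finset.sum_range_succ' (fun n => ‖v (n + r') - v n‖ ^ 2) (N + 1)]
        at hfull
      have hre : (∑ n ∈ range (N + 1), ‖v (n + 1 + r') - v (n + 1)‖ ^ 2) = S1 := by
        rw [hS1def]
        exact Finset.sum_congr rfl fun n _ => by rw [show n + 1 + r' = n + r' + 1 from by omega]
      rw [hre] at hfull
      have h0 : 0 ≤ ‖v (0 + r') - v 0‖ ^ 2 := by positivity
      have h' : k * S1 ≤ k * (C * (r' : ℝ)) := by
        calc k * S1 ≤ k * (S1 + ‖v (0 + r') - v 0‖ ^ 2) :=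
              mul_le_mul_of_nonneg_left (by linarith) hk0.le
          _ ≤ C * ((r' : ℝ) * k) := hfull
          _ = k * (C * (r' : ℝ)) := by ring
      exact le_of_mul_le_mul_left h' hk0
  have hS2 : S2 ≤ C * ((r' : ℝ) + 1) := by
    have hfull := hd (r' + 1) (by omega) (by omega)
    have hidx : M - (r' + 1) + 1 = N + 1 := by omega
    rw [hidx, Finset.sum_range_succ' (fun n => ‖v (n + (r' + 1)) - v n‖ ^ 2) N]
      at hfull
    have hre : (∑ n ∈ range N, ‖v (n + 1 + (r' + 1)) - v (n + 1)‖ ^ 2) = S2 := by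
      rw [hS2def]
      exact Finset.sum_congr rfl fun n _ => by rw [show n + 1 + (r' + 1) = n + r' + 2 from by omega]
    rw [hre] at hfull
    have h0 : 0 ≤ ‖v (0 + (r' + 1)) - v 0‖ ^ 2 := by positivity
    push_cast at hfull
    have h' : k * S2 ≤ k * (C * ((r' : ℝ) + 1)) := by
      calc k * S2 ≤ k * (S2 + ‖v (0 + (r' + 1)) - v 0‖ ^ 2) :=
            mul_le_mul_of_nonneg_left (by linarith) hk0.le
        _ ≤ C * (((r' : ℝ) + 1) * k) := hfull
        _ = k * (C * ((r' : ℝ) + 1)) := by ring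
    exact le_of_mul_le_mul_left h' hk0
  -- conclude
  rw [htotal2]
  have hks : 0 ≤ k - s := by linarith
  have h1 : (k - s) * S1 ≤ (k - s) * (C * (r' : ℝ)) :=
    mul_le_mul_of_nonneg_left hS1 hks
  have h2 : s * S2 ≤ s * (C * ((r' : ℝ) + 1)) :=
    mul_le_mul_of_nonneg_left hS2 hs0.le
  have hCδ : C * δ = C * ((r' : ℝ) * k) + C * s := by rw [hδeq]; ring
  linarith [h1, h2, hCδ, hδ0]
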